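/- arXiv:1803.09771 — 3 statements merged into one kernel-verified Lean document; each statement's English description precedes it below -/
import Mathlib

section
/- Let φ be a monotone predicate on finite subsets of ℕ (if φ(F) holds and F ⊆ G then φ(G) holds), and let 𝒜 = { X ⊆ ℕ : there is a finite set F ⊆ X with φ(F) }. Then 𝒜 is a largeness class if and only if for every k ≥ 1 there exists n ∈ ℕ such that for every partition (or cover) E₀ ∪ ⋯ ∪ E_{k−1} = {0, 1, …, n}, there is some j < k with φ(E_j). -/
/-- A collection `𝒜` of subsets of ℕ is a largeness class if it is closed upward under
the superset relation, and for every `k ≥ 1` and every `k`-cover of ℕ, one of the parts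
belongs to `𝒜`. -/
def LargenessClass (𝒜 : Set (Set ℕ)) : Prop :=
  (∀ X ∈ 𝒜, ∀ Y : Set ℕ, X ⊆ Y → Y ∈ 𝒜) ∧
  (∀ k : ℕ, 1 ≤ k → ∀ Y : Fin k → Set ℕ, (⋃ j, Y j) = Set.univ → ∃ j, Y j ∈ 𝒜)

/-- Compactness characterization of largeness for the class generated by a monotone
predicate `φ` on finite sets: `{X | ∃ finite F ⊆ X, φ F}` is a largeness class iff for
every `k ≥ 1` there is some `n` such that every `k`-cover of `{0, …, n}` has a part
satisfying `φ`. -/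
theorem largenessClass_iff_finite_covers (φ : Finset ℕ → Prop)
    (hmono : ∀ F G : Finset ℕ, F ⊆ G → φ F → φ G) :
    LargenessClass {X : Set ℕ | ∃ F : Finset ℕ, ↑F ⊆ X ∧ φ F} ↔
      ∀ k : ℕ, 1 ≤ k → ∃ n : ℕ, ∀ E : Fin k → Finset ℕ,
        Finset.univ.biUnion E = Finset.range (n + 1) → ∃ j, φ (E j) := by
  classical
  constructor
  · rintro ⟨hup, hcov⟩ k hk
    by_contra h
    push_neg at h
    choose E hE hbad using h
    have hk0 : 0 < k := hk
    -- coloring: for each n and i ≤ n, pick a part containing i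
    have hmem : ∀ n i, i ≤ n → ∃ j, i ∈ E n j := by
      intro n i hi
      have : i ∈ Finset.univ.biUnion (E n) := by
        rw [hE n]; simpa using Nat.lt_succ_of_le hi
      simpa using this
    let c : ℕ → ℕ → Fin k := fun n i =>
      if h : ∃ j, i ∈ E n j then h.choose else ⟨0, hk0⟩
    have hc : ∀ n i, i ≤ n → i ∈ E n (c n i) := by
      intro n i hi
      have h := hmem n i hi
      simp only [c, dif_pos h]
      exact h.choose_spec
    -- ultrafilter extending cofinite
    let U : Ultrafilter ℕ := Filter.hyperfilter ℕ
    have hU : ∀ i, ∃ j, {n | c n i = j} ∈ U := by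
      intro i
      have : (⋃ j : Fin k, {n | c n i = j}) ∈ U := by
        have : (⋃ j : Fin k, {n | c n i = j}) = Set.univ := by
          ext n; simp
        rw [this]; exact Filter.univ_mem
      have := (Ultrafilter.finite_biUnion_mem_iff (f := U)
        (is := (Set.univ : Set (Fin k))) (s := fun j => {n | c n i = j})
        Set.finite_univ).mp (by simpa using this)
      rcases this with ⟨j, _, hj⟩
      exact ⟨j, hj⟩
    choose cl hcl using hU
    obtain ⟨j, F, hF, hφ⟩ := hcov k hk (fun j => {i | cl i = j}) (by
      ext i; simp)
    -- find m large with c m agreeing with cl on F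
    have hS : {n | ∀ i ∈ F, c n i = cl i} ∈ U :=
      (F.eventually_all (l := (U : Filter ℕ))).mpr fun i _ => hcl i
    have hT : {n | ∀ i ∈ F, i ≤ n} ∈ U := by
      apply Filter.hyperfilter_le_cofinite
      apply Set.Finite.subset (Set.finite_Iio (if h : F.Nonempty then F.max' h else 0))
      intro n hn
      simp only [Set.mem_compl_iff, Set.mem_setOf_eq, not_forall] at hn
      obtain ⟨i, hiF, hi⟩ := hn
      have hne : F.Nonempty := ⟨i, hiF⟩
      simp only [dif_pos hne, Set.mem_Iio]
      exact lt_of_lt_of_le (not_le.mp hi) (F.le_max' i hiF)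
    obtain ⟨m, hm1, hm2⟩ := Filter.nonempty_of_mem (Filter.inter_mem hS hT : _ ∈ (U : Filter ℕ))
    refine hbad m j (hmono _ _ ?_ hφ)
    intro i hi
    have hij : cl i = j := hF hi
    have : c m i = j := by rw [hm1 i hi, hij]
    rw [← this]
    exact hc m i (hm2 i hi)
  · intro h
    constructor
    · rintro X ⟨F, hF, hφ⟩ Y hXY
      exact ⟨F, hF.trans hXY, hφ⟩
    · intro k hk Y hY
      obtain ⟨n, hn⟩ := h k hk
      let E : Fin k → Finset ℕ := fun j =>
        (Finset.range (n + 1)).filter (fun i => i ∈ Y j)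
      obtain ⟨j, hj⟩ := hn E (by
        ext i
        simp only [Finset.mem_biUnion, Finset.mem_filter, Finset.mem_univ, true_and, E]
        constructor
        · rintro ⟨_, hi, _⟩; exact hi
        · intro hi
          have : i ∈ ⋃ j, Y j := hY ▸ Set.mem_univ i
          obtain ⟨j, hj⟩ := Set.mem_iUnion.mp this
          exact ⟨j, hi, hj⟩)
      exact ⟨j, E j, fun i hi => (Finset.mem_filter.mp hi).2, hj⟩
end

section
/- Let 𝒜 be a largeness class all of whose members are infinite sets, and let R be a relation between finite subsets of ℕ and natural numbers such that: for every finite set σ ⊆ ℕ, every n ∈ ℕ, and every X ∈ 𝒜, there exists a finite set ρ ⊆ X with every element of ρ greater than every element of σ and R(σ ∪ ρ, n). Then for every set A ⊆ ℕ there exists an infinite set H with H ⊆ A or H ⊆ ℕ \ A such that for every n ∈ ℕ there is a finite set σ ⊆ H with R(σ, n). -/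
lemma pi2_aux (X : Set ℕ) (hXinf : X.Infinite) (R : Finset ℕ → ℕ → Prop)
    (hR : ∀ σ : Finset ℕ, ∀ n : ℕ, ∃ ρ : Finset ℕ, ↑ρ ⊆ X ∧
      (∀ a ∈ σ, ∀ b ∈ ρ, a < b) ∧ R (σ ∪ ρ) n) :
    ∃ H : Set ℕ, H.Infinite ∧ H ⊆ X ∧ ∀ n, ∃ σ : Finset ℕ, ↑σ ⊆ H ∧ R σ n := by
  have step : ∀ σ : Finset ℕ, ∀ n : ℕ, ∃ τ : Finset ℕ, (↑σ ⊆ X →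
      σ ⊆ τ ∧ ↑τ ⊆ X ∧ (∃ σ' : Finset ℕ, σ' ⊆ τ ∧ R σ' n) ∧
      ∃ x ∈ τ, ∀ a ∈ σ, a < x) := by
    intro σ n
    obtain ⟨ρ, hρX, hρgt, hρR⟩ := hR σ n
    obtain ⟨x, hxX, hxgt⟩ := hXinf.exists_gt ((σ ∪ ρ).sup id)
    refine ⟨σ ∪ ρ ∪ {x}, fun hσX => ⟨?_, ?_, ⟨σ ∪ ρ, ?_, hρR⟩, x, ?_, ?_⟩⟩
    · intro a ha; simp [ha]
    · intro a ha
      simp only [Finset.coe_union, Finset.coe_singleton, Set.mem_union,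
        Set.mem_singleton_iff] at ha
      rcases ha with (ha | ha) | ha
      · exact hσX ha
      · exact hρX ha
      · exact ha ▸ hxX
    · intro a ha; simp at ha ⊢; tauto
    · simp
    · intro a ha
      exact lt_of_le_of_lt (Finset.le_sup (f := id) (Finset.mem_union_left _ ha)) hxgt
  choose T hT using step
  set g : ℕ → Finset ℕ := fun n => Nat.rec ∅ (fun n σ => T σ n) n with hg
  have hgs : ∀ n, g (n + 1) = T (g n) n := fun n => rfl
  have hXg : ∀ n, ↑(g n) ⊆ X := by
    intro n
    induction n with
    | zero => simp [hg]
    | succ k ih =>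
      rw [hgs]
      exact (hT (g k) k ih).2.1
  have hmono : ∀ n, g n ⊆ g (n + 1) := fun n => (hT (g n) n (hXg n)).1
  have hmono' : ∀ m n, m ≤ n → g m ⊆ g n := by
    intro m n h
    induction n with
    | zero => simp_all
    | succ k ih =>
      rcases Nat.lt_or_ge m (k+1) with h' | h'
      · exact (ih (Nat.lt_succ_iff.mp h')).trans (hmono k)
      · have : m = k + 1 := le_antisymm h h'
        simp [this]
  have hx : ∀ n, ∃ x ∈ g (n+1), ∀ a ∈ g n, a < x :=
    fun n => (hT (g n) n (hXg n)).2.2.2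
  choose f hf1 hf2 using hx
  refine ⟨⋃ n, ↑(g n), ?_, ?_, ?_⟩
  · apply Set.infinite_of_injective_forall_mem (f := f)
    case hi =>
      have hsm : StrictMono f := by
        intro m n hmn
        exact hf2 n (f m) (hmono' (m+1) n hmn (hf1 m))
      exact hsm.injective
    case hf =>
      intro n
      exact Set.mem_iUnion.mpr ⟨n+1, hf1 n⟩
  · exact Set.iUnion_subset hXg
  · intro n
    obtain ⟨σ', hσ', hσR⟩ := (hT (g n) n (hXg n)).2.2.1
    exact ⟨σ', fun a ha => Set.mem_iUnion.mpr ⟨n+1, hσ' ha⟩, hσR⟩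

/-- Template for forcing Π⁰₂ facts with largeness classes: if `𝒜` is a largeness class
containing only infinite sets, and every finite `σ`, requirement `n`, and `X ∈ 𝒜` admit
a finite `ρ ⊆ X` beyond `σ` with `R (σ ∪ ρ) n`, then every set `A` has an infinite
subset `H` of it or of its complement meeting every requirement `R (·, n)` inside `H`. -/
theorem pi2_forcing_with_largeness (𝒜 : Set (Set ℕ)) (hL : LargenessClass 𝒜)
    (hinf : ∀ X ∈ 𝒜, X.Infinite) (R : Finset ℕ → ℕ → Prop)
    (hR : ∀ σ : Finset ℕ, ∀ n : ℕ, ∀ X ∈ 𝒜, ∃ ρ : Finset ℕ, ↑ρ ⊆ X ∧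
      (∀ a ∈ σ, ∀ b ∈ ρ, a < b) ∧ R (σ ∪ ρ) n)
    (A : Set ℕ) :
    ∃ H : Set ℕ, H.Infinite ∧ (H ⊆ A ∨ H ⊆ Aᶜ) ∧
      ∀ n, ∃ σ : Finset ℕ, ↑σ ⊆ H ∧ R σ n := by
  obtain ⟨j, hj⟩ := hL.2 2 one_le_two ![A, Aᶜ] (by
    ext x
    simp only [Set.mem_iUnion, Set.mem_univ, iff_true, Fin.exists_fin_two]
    simp only [Matrix.cons_val_zero, Matrix.cons_val_one, Matrix.head_cons, Set.mem_compl_iff]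
    exact em (x ∈ A))
  fin_cases j <;> simp only [Matrix.cons_val_zero, Matrix.cons_val_one, Matrix.head_cons] at hj
  · obtain ⟨H, h1, h2, h3⟩ := pi2_aux A (hinf A hj) R (fun σ n => hR σ n A hj)
    exact ⟨H, h1, Or.inl h2, h3⟩
  · obtain ⟨H, h1, h2, h3⟩ := pi2_aux Aᶜ (hinf Aᶜ hj) R (fun σ n => hR σ n Aᶜ hj)
    exact ⟨H, h1, Or.inr h2, h3⟩
end

section
/- There exists a set A ⊆ ℕ such that both A and ℕ \ A are infinite and neither the principal function p_A nor the principal function p_{ℕ\A} is dominated by any limit-computable function (equivalently, p_A and p_{ℕ\A} are both ∅′-hyperimmune). Consequently, preservation of ∅′-hyperimmunity for the pigeonhole principle cannot be extended to two functions simultaneously: for every infinite H ⊆ A, the H-computable function p_H dominates p_A, and for every infinite H ⊆ ℕ \ A, the H-computable function p_H dominates p_{ℕ\A}. -/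
/-- Oracle partial computability: `f` is partial recursive in the oracle `O`
(the analogue of `Nat.Partrec` with an extra base case for the oracle). -/
inductive OracleRecursiveIn (O : ℕ → ℕ) : (ℕ →. ℕ) → Prop
  | zero : OracleRecursiveIn O (pure 0)
  | succ : OracleRecursiveIn O ↑Nat.succ
  | left : OracleRecursiveIn O ↑fun n : ℕ => (Nat.unpair n).1
  | right : OracleRecursiveIn O ↑fun n : ℕ => (Nat.unpair n).2
  | oracle : OracleRecursiveIn O ↑O
  | pair {f g : ℕ →. ℕ} : OracleRecursiveIn O f → OracleRecursiveIn O g →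
      OracleRecursiveIn O fun n => Nat.pair <$> f n <*> g n
  | comp {f g : ℕ →. ℕ} : OracleRecursiveIn O f → OracleRecursiveIn O g →
      OracleRecursiveIn O fun n => g n >>= f
  | prec {f g : ℕ →. ℕ} : OracleRecursiveIn O f → OracleRecursiveIn O g →
      OracleRecursiveIn O (Nat.unpaired fun a n =>
        n.rec (f a) fun y IH => do let i ← IH; g (Nat.pair a (Nat.pair y i)))
  | rfind {f : ℕ →. ℕ} : OracleRecursiveIn O f →
      OracleRecursiveIn O fun a => Nat.rfind fun n => (fun m => m = 0) <$> f (Nat.pair a n)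

/-- The characteristic function of a set of naturals. -/
noncomputable def charFn (H : Set ℕ) : ℕ → ℕ := H.indicator fun _ => 1

/-- A total function on ℕ is computable relative to (the characteristic function of) `H`. -/
def OracleComputableIn (H : Set ℕ) (f : ℕ → ℕ) : Prop := OracleRecursiveIn (charFn H) ↑f

/-- `g` is limit-computable relative to `X`: some `X`-computable approximation
`h` converges pointwise to `g` in the limit of its second argument. -/
def LimitComputableIn (X : Set ℕ) (g : ℕ → ℕ) : Prop :=
  ∃ h : ℕ → ℕ → ℕ, OracleComputableIn X (fun n => h n.unpair.1 n.unpair.2) ∧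
    ∀ x, ∃ s₀, ∀ s, s₀ ≤ s → h x s = g x

/-- `g` is limit-computable (with a computable approximation). -/
def LimitComputable (g : ℕ → ℕ) : Prop := LimitComputableIn ∅ g

/-- The principal function of a set `X ⊆ ℕ`: `n ↦` the `(n+1)`-st smallest element. -/
noncomputable def principal (X : Set ℕ) : ℕ → ℕ := Nat.nth (· ∈ X)

namespace OracleRecursiveIn

theorem of_eq {O : ℕ → ℕ} {f g : ℕ →. ℕ} (h : OracleRecursiveIn O f) (H : ∀ n, f n = g n) :
    OracleRecursiveIn O g := (funext H : f = g) ▸ h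

theorem of_partrec {O : ℕ → ℕ} {f : ℕ →. ℕ} (h : Nat.Partrec f) : OracleRecursiveIn O f := by
  induction h with
  | zero => exact .zero
  | succ => exact .succ
  | left => exact .left
  | right => exact .right
  | pair _ _ ihf ihg => exact .pair ihf ihg
  | comp _ _ ihf ihg => exact .comp ihf ihg
  | prec _ _ ihf ihg => exact .prec ihf ihg
  | rfind _ ih => exact .rfind ih

theorem of_primrec {O : ℕ → ℕ} {f : ℕ → ℕ} (h : Nat.Primrec f) : OracleRecursiveIn O ↑f :=
  of_partrec (Nat.Partrec.of_primrec h)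

theorem totalComp {O : ℕ → ℕ} {f g : ℕ → ℕ} (hf : OracleRecursiveIn O ↑f) (hg : OracleRecursiveIn O ↑g) :
    OracleRecursiveIn O ↑(fun n => f (g n)) :=
  (hf.comp hg).of_eq fun n => by simp [PFun.coe_val, Part.bind_some]; exact Part.bind_some _ _

theorem totalPair {O : ℕ → ℕ} {f g : ℕ → ℕ} (hf : OracleRecursiveIn O ↑f) (hg : OracleRecursiveIn O ↑g) :
    OracleRecursiveIn O ↑(fun n => Nat.pair (f n) (g n)) :=
  (hf.pair hg).of_eq fun n => by simp [PFun.coe_val, Seq.seq]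

end OracleRecursiveIn


open Classical in
theorem computableIn_principal (H : Set ℕ) (hH : H.Infinite) :
    OracleComputableIn H (principal H) := by
  classical
  set O : ℕ → ℕ := charFn H with hOdef
  have hO : ∀ y, O y = if y ∈ H then 1 else 0 := by
    intro y; simp [hOdef, charFn, Set.indicator_apply]
  set cnt : ℕ → ℕ := Nat.count (· ∈ H) with hcnt
  have hHset : {n | (· ∈ H) n}.Infinite := by simpa [Set.setOf_mem_eq] using hH
  -- the step function for primitive recursion
  have hG : OracleRecursiveIn O ↑(fun m : ℕ =>
      Nat.unpaired (· + ·) (Nat.pair m.unpair.2.unpair.2 (O m.unpair.2.unpair.1))) :=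
    OracleRecursiveIn.totalComp (OracleRecursiveIn.of_primrec Nat.Primrec.add)
      (OracleRecursiveIn.totalPair
        (OracleRecursiveIn.of_primrec (Nat.Primrec.right.comp Nat.Primrec.right))
        (OracleRecursiveIn.totalComp OracleRecursiveIn.oracle
          (OracleRecursiveIn.of_primrec (Nat.Primrec.left.comp Nat.Primrec.right))))
  -- counting function via prec
  have hC : OracleRecursiveIn O ↑(fun p : ℕ => cnt p.unpair.2) := by
    refine (OracleRecursiveIn.prec OracleRecursiveIn.zero hG).of_eq fun p => ?_
    simp only [Nat.unpaired, PFun.coe_val]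
    generalize p.unpair.2 = n
    induction n with
    | zero => rfl
    | succ n ih =>
        simp only [Nat.rec_add_one, ih, Part.bind_some]
        simp [Nat.unpaired, Nat.unpair_pair, hO, hcnt, Nat.count_succ]
  -- F q = (q.unpair.1 + 1) - cnt (q.unpair.2 + 1)
  have hpack : OracleRecursiveIn O ↑(fun q : ℕ => Nat.pair 0 (q.unpair.2 + 1)) :=
    OracleRecursiveIn.of_primrec (Nat.Primrec.pair Nat.Primrec.zero
      (Nat.Primrec.succ.comp Nat.Primrec.right))
  have hF := OracleRecursiveIn.totalComp (OracleRecursiveIn.of_primrec Nat.Primrec.sub)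
      (OracleRecursiveIn.totalPair
        (OracleRecursiveIn.of_primrec (Nat.Primrec.succ.comp Nat.Primrec.left))
        (OracleRecursiveIn.totalComp hC hpack))
  refine (OracleRecursiveIn.rfind hF).of_eq fun a => ?_
  have key : ∀ m : ℕ, ((a + 1) - cnt (m + 1) = 0) ↔ (Nat.nth (· ∈ H) a ≤ m) := by
    intro m
    rw [Nat.sub_eq_zero_iff_le, Nat.succ_le_iff, hcnt]
    rw [Nat.lt_nth_iff_count_lt hHset]
    exact Nat.lt_succ_iff
  refine Part.eq_some_iff.2 (Nat.mem_rfind.2 ⟨?_, ?_⟩)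
  · simp only [PFun.coe_val, Nat.unpaired, Nat.unpair_pair, Part.map_eq_map, Part.map_some,
      Part.mem_some_iff]
    exact (decide_eq_true ((key _).2 le_rfl)).symm
  · intro m hm
    simp only [PFun.coe_val, Nat.unpaired, Nat.unpair_pair, Part.map_eq_map, Part.map_some,
      Part.mem_some_iff]
    exact (decide_eq_false (fun h => absurd hm (not_lt.2 ((key m).1 h)))).symm

open Classical in
theorem principal_mono {A H : Set ℕ} (hH : H.Infinite) (hsub : H ⊆ A) :
    ∀ x, principal A x ≤ principal H x := by
  classical
  intro x
  have hA : A.Infinite := hH.mono hsub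
  have hAset : {n | (· ∈ A) n}.Infinite := by simpa [Set.setOf_mem_eq] using hA
  have hHset : {n | (· ∈ H) n}.Infinite := by simpa [Set.setOf_mem_eq] using hH
  have h1 : Nat.count (· ∈ H) (Nat.nth (· ∈ H) x + 1) = x + 1 := by
    rw [Nat.count_succ, Nat.count_nth_of_infinite hHset, if_pos (Nat.nth_mem_of_infinite hHset x)]
  have h2 : x < Nat.count (· ∈ A) (Nat.nth (· ∈ H) x + 1) := by
    calc x < x + 1 := Nat.lt_succ_self x
    _ = Nat.count (· ∈ H) (Nat.nth (· ∈ H) x + 1) := h1.symm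
    _ ≤ Nat.count (· ∈ A) (Nat.nth (· ∈ H) x + 1) := Nat.count_mono_left fun k _ hk => hsub hk
  have := (Nat.lt_nth_iff_count_lt hAset).1 h2
  exact Nat.lt_succ_iff.1 this

inductive RCode : Type
  | zero : RCode
  | succ : RCode
  | left : RCode
  | right : RCode
  | oracle : RCode
  | pair : RCode → RCode → RCode
  | comp : RCode → RCode → RCode
  | prec : RCode → RCode → RCode
  | rfind : RCode → RCode

namespace RCode

def enc : RCode → ℕ
  | zero => 0
  | succ => 1
  | left => 2
  | right => 3
  | oracle => 4
  | pair a b => 5 * Nat.pair (enc a) (enc b) + 5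
  | comp a b => 5 * Nat.pair (enc a) (enc b) + 6
  | prec a b => 5 * Nat.pair (enc a) (enc b) + 7
  | rfind a => 5 * enc a + 8

theorem enc_inj : ∀ c₁ c₂ : RCode, enc c₁ = enc c₂ → c₁ = c₂ := by
  intro c₁
  induction c₁ with
  | zero => intro c₂ h; cases c₂ <;> simp [enc] at h ⊢ <;> omega
  | succ => intro c₂ h; cases c₂ <;> simp [enc] at h ⊢ <;> omega
  | left => intro c₂ h; cases c₂ <;> simp [enc] at h ⊢ <;> omega
  | right => intro c₂ h; cases c₂ <;> simp [enc] at h ⊢ <;> omega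
  | oracle => intro c₂ h; cases c₂ <;> simp [enc] at h ⊢ <;> omega
  | pair a b iha ihb =>
      intro c₂ h; cases c₂ <;> simp [enc] at h ⊢ <;> try omega
      · exact ⟨iha _ h.1, ihb _ h.2⟩
  | comp a b iha ihb =>
      intro c₂ h; cases c₂ <;> simp [enc] at h ⊢ <;> try omega
      · exact ⟨iha _ h.1, ihb _ h.2⟩
  | prec a b iha ihb =>
      intro c₂ h; cases c₂ <;> simp [enc] at h ⊢ <;> try omega
      · exact ⟨iha _ h.1, ihb _ h.2⟩
  | rfind a iha =>
      intro c₂ h; cases c₂ <;> simp [enc] at h ⊢ <;> try omega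
      · exact iha _ h

instance : Countable RCode := ⟨⟨enc, fun _ _ h => enc_inj _ _ h⟩⟩

def eval (O : ℕ → ℕ) : RCode → ℕ →. ℕ
  | zero => pure 0
  | succ => ↑Nat.succ
  | left => ↑fun n : ℕ => (Nat.unpair n).1
  | right => ↑fun n : ℕ => (Nat.unpair n).2
  | oracle => ↑O
  | pair a b => fun n => Nat.pair <$> eval O a n <*> eval O b n
  | comp a b => fun n => eval O b n >>= eval O a
  | prec a b => Nat.unpaired fun x n =>
      n.rec (eval O a x) fun y IH => do let i ← IH; eval O b (Nat.pair x (Nat.pair y i))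
  | rfind a => fun x => Nat.rfind fun n => (fun m => m = 0) <$> eval O a (Nat.pair x n)

theorem exists_code {O : ℕ → ℕ} {f : ℕ →. ℕ} (h : OracleRecursiveIn O f) :
    ∃ c : RCode, eval O c = f := by
  induction h with
  | zero => exact ⟨.zero, rfl⟩
  | succ => exact ⟨.succ, rfl⟩
  | left => exact ⟨.left, rfl⟩
  | right => exact ⟨.right, rfl⟩
  | oracle => exact ⟨.oracle, rfl⟩
  | pair _ _ ihf ihg =>
      obtain ⟨cf, rfl⟩ := ihf; obtain ⟨cg, rfl⟩ := ihg; exact ⟨.pair cf cg, rfl⟩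
  | comp _ _ ihf ihg =>
      obtain ⟨cf, rfl⟩ := ihf; obtain ⟨cg, rfl⟩ := ihg; exact ⟨.comp cf cg, rfl⟩
  | prec _ _ ihf ihg =>
      obtain ⟨cf, rfl⟩ := ihf; obtain ⟨cg, rfl⟩ := ihg; exact ⟨.prec cf cg, rfl⟩
  | rfind _ ih =>
      obtain ⟨cf, rfl⟩ := ih; exact ⟨.rfind cf, rfl⟩

end RCode

instance : Nonempty RCode := ⟨.zero⟩

open Classical in
noncomputable def limOf (O : ℕ → ℕ) (c : RCode) : ℕ → ℕ := fun x =>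
  if h : ∃ L, ∃ s₀, ∀ s, s₀ ≤ s → RCode.eval O c (Nat.pair x s) = Part.some L then
    h.choose else 0

theorem limOf_eq {g : ℕ → ℕ} (hg : LimitComputable g) : ∃ c, limOf (charFn ∅) c = g := by
  obtain ⟨h, hcomp, hlim⟩ := hg
  obtain ⟨c, hc⟩ := RCode.exists_code hcomp
  refine ⟨c, funext fun x => ?_⟩
  obtain ⟨s₀, hs₀⟩ := hlim x
  have hev : ∀ s, RCode.eval (charFn ∅) c (Nat.pair x s) = Part.some (h x s) := by
    intro s; rw [hc]; simp [Nat.unpair_pair]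
  have hex : ∃ L, ∃ t, ∀ s, t ≤ s → RCode.eval (charFn ∅) c (Nat.pair x s) = Part.some L :=
    ⟨g x, s₀, fun s hs => by rw [hev, hs₀ s hs]⟩
  simp only [limOf]
  rw [dif_pos hex]
  obtain ⟨t, ht⟩ := hex.choose_spec
  have h1 := ht (max t s₀) (le_max_left _ _)
  rw [hev, hs₀ _ (le_max_right _ _)] at h1
  exact (Part.some_inj.1 h1).symm

noncomputable def diagSeq (e : ℕ → ℕ → ℕ) : ℕ → ℕ
  | 0 => 0
  | j + 1 => diagSeq e j + 1 + (Finset.range (diagSeq e j + 1)).sup (e (j / 2))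

theorem diagSeq_strictMono (e : ℕ → ℕ → ℕ) : StrictMono (diagSeq e) :=
  strictMono_nat_of_lt_succ fun n => by simp [diagSeq]; omega

theorem diagSeq_key (e : ℕ → ℕ → ℕ) (j m : ℕ) (hm : m ≤ diagSeq e j) :
    e (j / 2) m < diagSeq e (j + 1) :=
  lt_of_le_of_lt (Finset.le_sup (Finset.mem_range.2 (Nat.lt_succ_of_le hm)))
    (by simp [diagSeq])

def diagSet (e : ℕ → ℕ → ℕ) : Set ℕ :=
  {x | ∃ k, diagSeq e (2 * k + 1) ≤ x ∧ x < diagSeq e (2 * k + 2)}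

theorem diag_odd_mem (e : ℕ → ℕ → ℕ) (k : ℕ) : diagSeq e (2 * k + 1) ∈ diagSet e :=
  ⟨k, le_rfl, diagSeq_strictMono e (by omega)⟩

theorem diag_even_not_mem (e : ℕ → ℕ → ℕ) (k : ℕ) : diagSeq e (2 * k) ∉ diagSet e := by
  rintro ⟨j, h1, h2⟩
  have l1 := (diagSeq_strictMono e).le_iff_le.1 h1
  have l2 := (diagSeq_strictMono e).lt_iff_lt.1 h2
  omega

theorem diag_gap (e : ℕ → ℕ → ℕ) (k : ℕ) {x : ℕ} (hx : x ∈ diagSet e)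
    (hlt : x < diagSeq e (2 * k + 1)) : x < diagSeq e (2 * k) := by
  obtain ⟨j, h1, h2⟩ := hx
  have l1 := (diagSeq_strictMono e).lt_iff_lt.1 (lt_of_le_of_lt h1 hlt)
  have : 2 * j + 2 ≤ 2 * k := by omega
  exact lt_of_lt_of_le h2 ((diagSeq_strictMono e).monotone this)

theorem diag_gap_compl (e : ℕ → ℕ → ℕ) (k : ℕ) {x : ℕ} (hx : x ∉ diagSet e)
    (hlt : x < diagSeq e (2 * k + 2)) : x < diagSeq e (2 * k + 1) := by
  by_contra hc
  exact hx ⟨k, not_lt.1 hc, hlt⟩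

open Classical in
theorem diag_count_le (e : ℕ → ℕ → ℕ) (k : ℕ) :
    Nat.count (· ∈ diagSet e) (diagSeq e (2 * k + 1)) ≤ diagSeq e (2 * k) := by
  classical
  rw [Nat.count_eq_card_filter_range]
  refine le_trans (Finset.card_le_card ?_) (le_of_eq (Finset.card_range (diagSeq e (2 * k))))
  intro x hx
  rw [Finset.mem_filter, Finset.mem_range] at hx
  exact Finset.mem_range.2 (diag_gap e k hx.2 hx.1)

open Classical in
theorem diag_count_le_compl (e : ℕ → ℕ → ℕ) (k : ℕ) :
    Nat.count (· ∈ (diagSet e)ᶜ) (diagSeq e (2 * k + 2)) ≤ diagSeq e (2 * k + 1) := by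
  classical
  rw [Nat.count_eq_card_filter_range]
  refine le_trans (Finset.card_le_card ?_)
    (le_of_eq (Finset.card_range (diagSeq e (2 * k + 1))))
  intro x hx
  rw [Finset.mem_filter, Finset.mem_range] at hx
  exact Finset.mem_range.2 (diag_gap_compl e k hx.2 hx.1)

/-- There is a bi-infinite set `A` such that neither the principal function of `A` nor
that of its complement is dominated by a limit-computable function (i.e. both are
∅′-hyperimmune); yet for every infinite `H ⊆ A` the `H`-computable function `p_H`
dominates `p_A`, and likewise on the complement side. Hence preservation of
∅′-hyperimmunity cannot be extended to two functions simultaneously. -/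
theorem two_delta2_hyperimmunities_not_preservable :
    ∃ A : Set ℕ, A.Infinite ∧ Aᶜ.Infinite ∧
      (∀ g : ℕ → ℕ, LimitComputable g → ¬ ∀ x, principal A x ≤ g x) ∧
      (∀ g : ℕ → ℕ, LimitComputable g → ¬ ∀ x, principal Aᶜ x ≤ g x) ∧
      (∀ H : Set ℕ, H.Infinite → H ⊆ A →
        OracleComputableIn H (principal H) ∧ ∀ x, principal A x ≤ principal H x) ∧
      (∀ H : Set ℕ, H.Infinite → H ⊆ Aᶜ →
        OracleComputableIn H (principal H) ∧ ∀ x, principal Aᶜ x ≤ principal H x) := by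
  classical
  obtain ⟨u, hu⟩ := exists_surjective_nat RCode
  set e : ℕ → ℕ → ℕ := fun k => limOf (charFn ∅) (u k) with he
  refine ⟨diagSet e, ?_, ?_, ?_, ?_, ?_, ?_⟩
  · exact Set.infinite_of_injective_forall_mem
      (f := fun k : ℕ => diagSeq e (2 * k + 1))
      (fun a b hab => by
        have := (diagSeq_strictMono e).injective hab; omega)
      (fun k => diag_odd_mem e k)
  · exact Set.infinite_of_injective_forall_mem
      (f := fun k : ℕ => diagSeq e (2 * k))
      (fun a b hab => by
        have := (diagSeq_strictMono e).injective hab; omega)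
      (fun k => diag_even_not_mem e k)
  · intro g hg hdom
    obtain ⟨c, hc⟩ := limOf_eq hg
    obtain ⟨k, hk⟩ := hu c
    have hek : e k = g := by rw [he]; simp only; rw [hk, hc]
    set N := Nat.count (· ∈ diagSet e) (diagSeq e (2 * k + 1)) with hN
    have h1 : principal (diagSet e) N = diagSeq e (2 * k + 1) :=
      Nat.nth_count (diag_odd_mem e k)
    have h2 : N ≤ diagSeq e (2 * k) := diag_count_le e k
    have h3 : g N < diagSeq e (2 * k + 1) := by
      have := diagSeq_key e (2 * k) N h2
      rw [show 2 * k / 2 = k by omega, hek] at this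
      exact this
    have := hdom N
    rw [h1] at this
    omega
  · intro g hg hdom
    obtain ⟨c, hc⟩ := limOf_eq hg
    obtain ⟨k, hk⟩ := hu c
    have hek : e k = g := by rw [he]; simp only; rw [hk, hc]
    set N := Nat.count (· ∈ (diagSet e)ᶜ) (diagSeq e (2 * k + 2)) with hN
    have hmem : diagSeq e (2 * k + 2) ∈ (diagSet e)ᶜ := by
      have := diag_even_not_mem e (k + 1)
      simpa [show 2 * (k + 1) = 2 * k + 2 by omega] using this
    have h1 : principal (diagSet e)ᶜ N = diagSeq e (2 * k + 2) :=
      Nat.nth_count hmem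
    have h2 : N ≤ diagSeq e (2 * k + 1) := diag_count_le_compl e k
    have h3 : g N < diagSeq e (2 * k + 2) := by
      have := diagSeq_key e (2 * k + 1) N h2
      rw [show (2 * k + 1) / 2 = k by omega, hek] at this
      exact this
    have := hdom N
    rw [h1] at this
    omega
  · intro H hH hsub
    exact ⟨computableIn_principal H hH, principal_mono hH hsub⟩
  · intro H hH hsub
    exact ⟨computableIn_principal H hH, principal_mono hH hsub⟩
end
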